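/- A rational function T(x₁,x₂) ∈ ℚ(x₁,x₂) is a mutation invariant of the A₁ × A₁ type (i.e., T(2/x₁, x₂) = T(x₁,x₂) = T(x₁, 2/x₂)) and is a Laurent polynomial if and only if there exists a polynomial G(X₁,X₂) ∈ ℚ[X₁,X₂] such that T(x₁,x₂) = G(x₁ + 2/x₁, x₂ + 2/x₂). -/

import Mathlib

open MvPolynomial

/-- The field of rational functions `ℚ(x₁, x₂)`. -/
noncomputable abbrev QF := FractionRing (MvPolynomial (Fin 2) ℚ)

noncomputable def x₁ : QF := algebraMap (MvPolynomial (Fin 2) ℚ) QF (X 0)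
noncomputable def x₂ : QF := algebraMap (MvPolynomial (Fin 2) ℚ) QF (X 1)

/-- The ring hom `ℚ →+* ℚ(x₁,x₂)`. -/
noncomputable def φ : ℚ →+* QF :=
  (algebraMap (MvPolynomial (Fin 2) ℚ) QF).comp (MvPolynomial.C)

/-- Evaluation of a polynomial `p ∈ ℚ[X₁,X₂]` at a pair of elements of
`ℚ(x₁,x₂)`. -/
noncomputable def pev (p : MvPolynomial (Fin 2) ℚ) (a b : QF) : QF :=
  MvPolynomial.eval₂ φ ![a, b] p

noncomputable section
abbrev MvP := MvPolynomial (Fin 2) ℚ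
def ι : MvP →+* QF := algebraMap MvP QF

instance : CharZero QF := charZero_of_injective_algebraMap (IsFractionRing.injective MvP QF)

lemma φ_eq : φ = algebraMap ℚ QF := by
  rw [IsScalarTower.algebraMap_eq ℚ MvP QF, φ, MvPolynomial.algebraMap_eq]

lemma ι_inj : Function.Injective ι := IsFractionRing.injective MvP QF

lemma hx1 : x₁ ≠ 0 := fun h => MvPolynomial.X_ne_zero 0 (ι_inj (h.trans (map_zero ι).symm))
lemma hx2 : x₂ ≠ 0 := fun h => MvPolynomial.X_ne_zero 1 (ι_inj (h.trans (map_zero ι).symm))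

lemma pev_eq (p : MvP) (a b : QF) :
    pev p a b = ∑ m ∈ p.support, φ (coeff m p) * (a ^ m 0 * b ^ m 1) := by
  rw [pev, eval₂_eq']
  refine Finset.sum_congr rfl fun m _ => ?_
  rw [Fin.prod_univ_two]; simp

lemma ι_monomial (k : Fin 2 →₀ ℕ) (c : ℚ) : ι (monomial k c) = φ c * (x₁ ^ k 0 * x₂ ^ k 1) := by
  have h : (monomial k c : MvP) = C c * (X 0 ^ k 0 * X 1 ^ k 1) := by
    rw [monomial_eq, Finsupp.prod_fintype _ _ (fun i => pow_zero _), Fin.prod_univ_two]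
  rw [h, map_mul, map_mul, map_pow, map_pow]; rfl

lemma key_inj (p : MvP) (h : pev p (2 / x₁) x₂ = 0) : p = 0 := by
  by_contra hp
  set N := p.degreeOf 0 with hN
  have hsup : ∀ m ∈ p.support, m 0 ≤ N := degreeOf_le_iff.mp le_rfl
  set u : (Fin 2 →₀ ℕ) → (Fin 2 →₀ ℕ) := fun m => Finsupp.update m 0 (N - m 0) with hu
  set Rp : MvP := ∑ m ∈ p.support, monomial (u m) (2 ^ (m 0) * coeff m p) with hRp
  have key : ι Rp = x₁ ^ N * pev p (2 / x₁) x₂ := by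
    rw [pev_eq, Finset.mul_sum, hRp, map_sum]
    refine Finset.sum_congr rfl fun m hm => ?_
    have hmN := hsup m hm
    rw [ι_monomial]
    have hu0 : u m 0 = N - m 0 := by simp [hu]
    have hu1 : u m 1 = m 1 := by simp [hu]
    rw [hu0, hu1, map_mul, map_pow]
    have h2 : φ 2 = 2 := by rw [map_ofNat]
    have hpow : x₁ ^ N * (2 / x₁) ^ m 0 = (2:QF) ^ m 0 * x₁ ^ (N - m 0) := by
      rw [div_pow, eq_comm, mul_comm ((2:QF) ^ m 0)]
      rw [pow_sub₀ _ hx1 hmN]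
      field_simp
    calc φ 2 ^ m 0 * φ (coeff m p) * (x₁ ^ (N - m 0) * x₂ ^ m 1)
        = (x₁ ^ N * (2 / x₁) ^ m 0) * (φ (coeff m p) * x₂ ^ m 1) := by rw [hpow, h2]; ring
      _ = x₁ ^ N * (φ (coeff m p) * ((2 / x₁) ^ m 0 * x₂ ^ m 1)) := by ring
  rw [h, mul_zero] at key
  have hR0 : Rp = 0 := ι_inj (key.trans (map_zero ι).symm)
  obtain ⟨m₀, hm₀⟩ := (support_nonempty.mpr hp)
  have hc : coeff (u m₀) Rp = 2 ^ (m₀ 0) * coeff m₀ p := by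
    rw [hRp, coeff_sum]
    rw [Finset.sum_eq_single m₀]
    · rw [coeff_monomial, if_pos rfl]
    · intro m hm hne
      rw [coeff_monomial, if_neg]
      intro heq
      apply hne
      have h0 : m 0 = m₀ 0 := by
        have := DFunLike.congr_fun heq 0
        simp [hu] at this
        have := hsup m hm; have := hsup m₀ hm₀
        omega
      have h1 : m 1 = m₀ 1 := by
        have := DFunLike.congr_fun heq 1
        simpa [hu] using this
      ext i; fin_cases i <;> assumption
    · intro hmem; exact absurd hm₀ hmem
  rw [hR0, coeff_zero] at hc
  have : coeff m₀ p ≠ 0 := mem_support_iff.mp hm₀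
  have h2 : (2:ℚ) ^ (m₀ 0) ≠ 0 := pow_ne_zero _ two_ne_zero
  rcases mul_eq_zero.mp hc.symm with h' | h'
  · exact h2 h'
  · exact this h'

def f₁ : MvP →+* QF := eval₂Hom φ ![2 / x₁, x₂]

lemma f₁_pev (p : MvP) : f₁ p = pev p (2 / x₁) x₂ := rfl

lemma f₁_inj : Function.Injective f₁ :=
  (injective_iff_map_eq_zero f₁).mpr fun p hp => key_inj p (by rwa [← f₁_pev])

def σ₁ : QF →+* QF := IsFractionRing.lift f₁_inj

lemma σ₁_ι (a : MvP) : σ₁ (ι a) = f₁ a := IsFractionRing.lift_algebraMap f₁_inj a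

lemma σ₁_x₁ : σ₁ x₁ = 2 / x₁ := by
  show σ₁ (ι (X 0)) = 2 / x₁
  rw [σ₁_ι, f₁_pev, pev, eval₂_X]
  rfl

lemma σ₁_x₂ : σ₁ x₂ = x₂ := by
  show σ₁ (ι (X 1)) = x₂
  rw [σ₁_ι, f₁_pev, pev, eval₂_X]
  rfl

lemma σ₁_φ (c : ℚ) : σ₁ (φ c) = φ c := by
  show σ₁ (ι (C c)) = φ c
  rw [σ₁_ι, f₁_pev, pev, eval₂_C]

lemma pev_hom (k : QF →+* QF) (hk : ∀ c, k (φ c) = φ c) (p : MvP) (a b : QF) :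
    k (pev p a b) = pev p (k a) (k b) := by
  rw [pev, pev, eval₂_comp_left]
  congr 1
  · exact RingHom.ext hk
  · funext i; fin_cases i <;> simp

def g₂ : MvP →+* QF := ι.comp (rename (Equiv.swap (0:Fin 2) 1)).toRingHom

lemma g₂_inj : Function.Injective g₂ :=
  ι_inj.comp (rename_injective _ (Equiv.injective _))

def Sw : QF →+* QF := IsFractionRing.lift g₂_inj

lemma Sw_ι (a : MvP) : Sw (ι a) = ι (rename (Equiv.swap (0:Fin 2) 1) a) :=
  IsFractionRing.lift_algebraMap g₂_inj a

lemma Sw_x₁ : Sw x₁ = x₂ := by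
  show Sw (ι (X 0)) = x₂
  rw [Sw_ι, rename_X, Equiv.swap_apply_left]; rfl

lemma Sw_x₂ : Sw x₂ = x₁ := by
  show Sw (ι (X 1)) = x₁
  rw [Sw_ι, rename_X, Equiv.swap_apply_right]; rfl

lemma Sw_φ (c : ℚ) : Sw (φ c) = φ c := by
  show Sw (ι (C c)) = φ c
  rw [Sw_ι, rename_C]; rfl

lemma Sw_Sw : Sw.comp Sw = RingHom.id QF := by
  apply IsLocalization.ringHom_ext (nonZeroDivisors MvP)
  refine RingHom.ext fun a => ?_
  show Sw (Sw (ι a)) = ι a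
  rw [Sw_ι, Sw_ι, rename_rename]
  have : (Equiv.swap (0:Fin 2) 1) ∘ (Equiv.swap (0:Fin 2) 1) = id := by
    funext i; simp [Equiv.swap_apply_self]
  rw [this, rename_id]; rfl

def σ₂ : QF →+* QF := Sw.comp (σ₁.comp Sw)

lemma σ₂_x₁ : σ₂ x₁ = x₁ := by
  show Sw (σ₁ (Sw x₁)) = x₁
  rw [Sw_x₁, σ₁_x₂, Sw_x₂]

lemma σ₂_x₂ : σ₂ x₂ = 2 / x₂ := by
  show Sw (σ₁ (Sw x₂)) = 2 / x₂
  rw [Sw_x₂, σ₁_x₁, map_div₀, map_ofNat, Sw_x₁]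

lemma σ₂_φ (c : ℚ) : σ₂ (φ c) = φ c := by
  show Sw (σ₁ (Sw (φ c))) = φ c
  rw [Sw_φ, σ₁_φ, Sw_φ]

lemma h2QF : (2:QF) ≠ 0 := two_ne_zero

lemma two_mem (W : Subalgebra ℚ QF) : (2:QF) ∈ W := by
  have := W.algebraMap_mem (2:ℚ)
  rwa [map_ofNat] at this

lemma cheb (x : QF) (hx : x ≠ 0) (W : Subalgebra ℚ QF) (hW : x + 2 / x ∈ W) :
    ∀ n : ℕ, x ^ n + 2 ^ n / x ^ n ∈ W := by
  intro n
  induction n using Nat.strong_induction_on with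
  | _ n ih =>
    match n with
    | 0 => simpa using add_mem W.one_mem W.one_mem
    | 1 => simpa using hW
    | (n+2) =>
      have h1 := ih (n+1) (by omega)
      have h0 := ih n (by omega)
      have key : x ^ (n+2) + 2 ^ (n+2) / x ^ (n+2)
          = (x + 2/x) * (x^(n+1) + 2^(n+1)/x^(n+1)) - 2 * (x^n + 2^n/x^n) := by
        have hxn : x ^ n ≠ 0 := pow_ne_zero _ hx
        field_simp
        ring
      rw [key]
      exact sub_mem (mul_mem hW h1) (mul_mem (two_mem W) h0)

/-- The basic symmetric building block. -/
def E (x : QF) (a b : ℕ) : QF := x ^ a / x ^ b + ((2:QF) ^ a / 2 ^ b) * (x ^ b / x ^ a)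

lemma E_mem (x : QF) (hx : x ≠ 0) (W : Subalgebra ℚ QF) (hW : x + 2 / x ∈ W) (a b : ℕ) :
    E x a b ∈ W := by
  rcases le_or_gt b a with hab | hab
  · obtain ⟨c, rfl⟩ : ∃ c, a = b + c := ⟨a - b, by omega⟩
    have : E x (b + c) b = x ^ c + 2 ^ c / x ^ c := by
      rw [E, pow_add, pow_add]
      have hxb : x ^ b ≠ 0 := pow_ne_zero _ hx
      have hxc : x ^ c ≠ 0 := pow_ne_zero _ hx
      have h2b : (2:QF) ^ b ≠ 0 := pow_ne_zero _ h2QF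
      field_simp
    rw [this]; exact cheb x hx W hW c
  · obtain ⟨c, rfl⟩ : ∃ c, b = a + c := ⟨b - a, by omega⟩
    have : E x a (a + c) = φ ((2 ^ c : ℚ)⁻¹) * (x ^ c + 2 ^ c / x ^ c) := by
      rw [E, pow_add, pow_add]
      have hφ : φ ((2 ^ c : ℚ)⁻¹) = ((2:QF) ^ c)⁻¹ := by
        rw [map_inv₀, map_pow, map_ofNat]
      rw [hφ]
      have hxa : x ^ a ≠ 0 := pow_ne_zero _ hx
      have hxc : x ^ c ≠ 0 := pow_ne_zero _ hx
      have h2a : (2:QF) ^ a ≠ 0 := pow_ne_zero _ h2QF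
      have h2c : (2:QF) ^ c ≠ 0 := pow_ne_zero _ h2QF
      field_simp
      ring
    rw [this]
    exact mul_mem (φ_eq ▸ W.algebraMap_mem _) (cheb x hx W hW c)

lemma expand4 (s t : ℕ) (c : ℚ) (m0 m1 : ℕ) :
    φ c * (E x₁ m0 s * E x₂ m1 t) =
      φ c * (x₁ ^ m0 * x₂ ^ m1) / (x₁ ^ s * x₂ ^ t)
    + φ c * ((2/x₁) ^ m0 * x₂ ^ m1) / ((2/x₁) ^ s * x₂ ^ t)
    + φ c * (x₁ ^ m0 * (2/x₂) ^ m1) / (x₁ ^ s * (2/x₂) ^ t)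
    + φ c * ((2/x₁) ^ m0 * (2/x₂) ^ m1) / ((2/x₁) ^ s * (2/x₂) ^ t) := by
  simp only [E, div_eq_mul_inv, mul_pow, inv_pow, mul_inv, inv_inv]
  ring

lemma hom_div (k : QF →+* QF) (hk : ∀ c, k (φ c) = φ c) (q : MvP) (a b : QF) (s t : ℕ) :
    k (pev q a b / (a ^ s * b ^ t)) = pev q (k a) (k b) / ((k a) ^ s * (k b) ^ t) := by
  rw [map_div₀, map_mul, map_pow, map_pow, pev_hom k hk]

lemma σ₁_two_div_x₂ : σ₁ (2 / x₂) = 2 / x₂ := by rw [map_div₀, map_ofNat, σ₁_x₂]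
lemma σ₂_two_div_x₁ : σ₂ (2 / x₁) = 2 / x₁ := by rw [map_div₀, map_ofNat, σ₂_x₁]

lemma sum_rep (q : MvP) (a b : QF) (s t : ℕ) :
    pev q a b / (a ^ s * b ^ t)
      = ∑ m ∈ q.support, φ (coeff m q) * (a ^ m 0 * b ^ m 1) / (a ^ s * b ^ t) := by
  rw [pev_eq, Finset.sum_div]

lemma forward (T : QF) (p : MvP) (s t : ℕ)
    (hT : T = pev p x₁ x₂ / (x₁ ^ s * x₂ ^ t))
    (h1 : pev p (2 / x₁) x₂ / ((2 / x₁) ^ s * x₂ ^ t) = T)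
    (h2 : pev p x₁ (2 / x₂) / (x₁ ^ s * (2 / x₂) ^ t) = T) :
    ∃ G : MvP, T = pev G (x₁ + 2 / x₁) (x₂ + 2 / x₂) := by
  set W := Algebra.adjoin ℚ (Set.range ![x₁ + 2/x₁, x₂ + 2/x₂]) with hW
  have hz1 : x₁ + 2/x₁ ∈ W := Algebra.subset_adjoin ⟨0, rfl⟩
  have hz2 : x₂ + 2/x₂ ∈ W := Algebra.subset_adjoin ⟨1, rfl⟩
  have hσ₁T : σ₁ T = T := by
    conv_lhs => rw [hT]
    rw [hom_div σ₁ σ₁_φ, σ₁_x₁, σ₁_x₂, h1]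
  have h4 : pev p (2/x₁) (2/x₂) / ((2/x₁) ^ s * (2/x₂) ^ t) = T := by
    have h := congrArg σ₁ h2
    rwa [hom_div σ₁ σ₁_φ, σ₁_x₁, σ₁_two_div_x₂, hσ₁T] at h
  have hsum : (4:QF) * T = ∑ m ∈ p.support, φ (coeff m p) * (E x₁ (m 0) s * E x₂ (m 1) t) := by
    rw [Finset.sum_congr rfl (fun m _ => expand4 s t (coeff m p) (m 0) (m 1)),
      Finset.sum_add_distrib, Finset.sum_add_distrib, Finset.sum_add_distrib,
      ← sum_rep, ← sum_rep, ← sum_rep, ← sum_rep, ← hT, h1, h2, h4]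
    ring
  have h4T : (4:QF) * T ∈ W := by
    rw [hsum]
    exact sum_mem fun m _ => mul_mem (φ_eq ▸ W.algebraMap_mem _)
      (mul_mem (E_mem x₁ hx1 W hz1 _ _) (E_mem x₂ hx2 W hz2 _ _))
  have hTW : T ∈ W := by
    have h4inv : T = φ (4⁻¹) * (4 * T) := by
      have : φ ((4:ℚ)⁻¹) = ((4:QF))⁻¹ := by rw [map_inv₀, map_ofNat]
      rw [this]
      field_simp
    rw [h4inv]
    exact mul_mem (φ_eq ▸ W.algebraMap_mem _) h4T
  rw [hW, Algebra.adjoin_range_eq_range_aeval] at hTW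
  obtain ⟨G, hG⟩ := hTW
  simp only [AlgHom.toRingHom_eq_coe, RingHom.coe_coe] at hG
  refine ⟨G, ?_⟩
  rw [pev, φ_eq, ← aeval_def, hG]

lemma laurent_rep :
    ∀ y ∈ Algebra.adjoin ℚ (Set.range ![x₁ + 2/x₁, x₂ + 2/x₂]),
      ∃ (p : MvP) (s t : ℕ), y = pev p x₁ x₂ / (x₁ ^ s * x₂ ^ t) := by
  intro y hy
  induction hy using Algebra.adjoin_induction with
  | mem z hz =>
    obtain ⟨i, rfl⟩ := hz
    fin_cases i
    · refine ⟨X 0 ^ 2 + C 2, 1, 0, ?_⟩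
      have : pev (X 0 ^ 2 + C 2) x₁ x₂ = x₁ ^ 2 + 2 := by
        simp [pev, eval₂_add, eval₂_pow, eval₂_X, eval₂_C, map_ofNat]
      rw [this]
      show x₁ + 2 / x₁ = _
      rw [pow_one, pow_zero, mul_one]
      field_simp [hx1]
    · refine ⟨X 1 ^ 2 + C 2, 0, 1, ?_⟩
      have : pev (X 1 ^ 2 + C 2) x₁ x₂ = x₂ ^ 2 + 2 := by
        simp [pev, eval₂_add, eval₂_pow, eval₂_X, eval₂_C, map_ofNat]
      rw [this]
      show x₂ + 2 / x₂ = _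
      rw [pow_one, pow_zero, one_mul]
      field_simp [hx2]
  | algebraMap r =>
    refine ⟨C r, 0, 0, ?_⟩
    simp [pev, eval₂_C, ← φ_eq]
  | add a b ha hb iha ihb =>
    obtain ⟨p₁, s₁, t₁, rfl⟩ := iha
    obtain ⟨p₂, s₂, t₂, rfl⟩ := ihb
    refine ⟨p₁ * X 0 ^ s₂ * X 1 ^ t₂ + p₂ * X 0 ^ s₁ * X 1 ^ t₁, s₁ + s₂, t₁ + t₂, ?_⟩
    have hp : pev (p₁ * X 0 ^ s₂ * X 1 ^ t₂ + p₂ * X 0 ^ s₁ * X 1 ^ t₁) x₁ x₂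
        = pev p₁ x₁ x₂ * x₁ ^ s₂ * x₂ ^ t₂ + pev p₂ x₁ x₂ * x₁ ^ s₁ * x₂ ^ t₁ := by
      simp [pev, eval₂_add, eval₂_mul, eval₂_pow, eval₂_X]
    rw [hp, pow_add, pow_add]
    have h1 : x₁ ^ s₁ ≠ 0 := pow_ne_zero _ hx1
    have h2 : x₁ ^ s₂ ≠ 0 := pow_ne_zero _ hx1
    have h3 : x₂ ^ t₁ ≠ 0 := pow_ne_zero _ hx2
    have h4 : x₂ ^ t₂ ≠ 0 := pow_ne_zero _ hx2
    field_simp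
  | mul a b ha hb iha ihb =>
    obtain ⟨p₁, s₁, t₁, rfl⟩ := iha
    obtain ⟨p₂, s₂, t₂, rfl⟩ := ihb
    refine ⟨p₁ * p₂, s₁ + s₂, t₁ + t₂, ?_⟩
    have hp : pev (p₁ * p₂) x₁ x₂ = pev p₁ x₁ x₂ * pev p₂ x₁ x₂ := by
      simp [pev, eval₂_mul]
    rw [hp, pow_add, pow_add]
    rw [div_mul_div_comm]
    ring

lemma backward (T : QF) (G : MvP) (hG : T = pev G (x₁ + 2 / x₁) (x₂ + 2 / x₂)) :
    ∃ (p : MvP) (s t : ℕ),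
      T = pev p x₁ x₂ / (x₁ ^ s * x₂ ^ t) ∧
      pev p (2 / x₁) x₂ / ((2 / x₁) ^ s * x₂ ^ t) = T ∧
      pev p x₁ (2 / x₂) / (x₁ ^ s * (2 / x₂) ^ t) = T := by
  have hTW : T ∈ Algebra.adjoin ℚ (Set.range ![x₁ + 2/x₁, x₂ + 2/x₂]) := by
    rw [Algebra.adjoin_range_eq_range_aeval]
    refine ⟨G, ?_⟩
    simp only [AlgHom.toRingHom_eq_coe, RingHom.coe_coe]
    rw [hG, pev, φ_eq, aeval_def]
  obtain ⟨p, s, t, hp⟩ := laurent_rep T hTW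
  have hσ₁z₁ : σ₁ (x₁ + 2 / x₁) = x₁ + 2 / x₁ := by
    rw [map_add, σ₁_x₁, map_div₀, map_ofNat, σ₁_x₁]
    have : (2:QF) / (2 / x₁) = x₁ := by
      rw [div_div_eq_mul_div, mul_div_assoc, mul_comm, div_mul_cancel₀ _ h2QF]
    rw [this, add_comm]
  have hσ₁z₂ : σ₁ (x₂ + 2 / x₂) = x₂ + 2 / x₂ := by
    rw [map_add, σ₁_x₂, map_div₀, map_ofNat, σ₁_x₂]
  have hσ₂z₁ : σ₂ (x₁ + 2 / x₁) = x₁ + 2 / x₁ := by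
    rw [map_add, σ₂_x₁, map_div₀, map_ofNat, σ₂_x₁]
  have hσ₂z₂ : σ₂ (x₂ + 2 / x₂) = x₂ + 2 / x₂ := by
    rw [map_add, σ₂_x₂, map_div₀, map_ofNat, σ₂_x₂]
    have : (2:QF) / (2 / x₂) = x₂ := by
      rw [div_div_eq_mul_div, mul_div_assoc, mul_comm, div_mul_cancel₀ _ h2QF]
    rw [this, add_comm]
  have hσ₁T : σ₁ T = T := by
    conv_lhs => rw [hG]
    rw [pev_hom σ₁ σ₁_φ, hσ₁z₁, hσ₁z₂, ← hG]
  have hσ₂T : σ₂ T = T := by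
    conv_lhs => rw [hG]
    rw [pev_hom σ₂ σ₂_φ, hσ₂z₁, hσ₂z₂, ← hG]
  refine ⟨p, s, t, hp, ?_, ?_⟩
  · have h := congrArg σ₁ hp
    rw [hom_div σ₁ σ₁_φ, σ₁_x₁, σ₁_x₂, hσ₁T] at h
    exact h.symm
  · have h := congrArg σ₂ hp
    rw [hom_div σ₂ σ₂_φ, σ₂_x₁, σ₂_x₂, hσ₂T] at h
    exact h.symm

/-- A non-constant rational function `T ∈ ℚ(x₁,x₂)` is a Laurent mutation
invariant of type `A₁ × A₁` (it is a Laurent polynomial `p(x₁,x₂)/(x₁ˢx₂ᵗ)`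
invariant under `x₁ ↦ 2/x₁` and `x₂ ↦ 2/x₂`) if and only if
`T = G(x₁ + 2/x₁, x₂ + 2/x₂)` for some polynomial `G ∈ ℚ[X₁,X₂]`. -/
theorem stmt_19 (T : QF) (hnc : ¬ ∃ c : ℚ, T = φ c) :
    (∃ (p : MvPolynomial (Fin 2) ℚ) (s t : ℕ),
      T = pev p x₁ x₂ / (x₁ ^ s * x₂ ^ t) ∧
      pev p (2 / x₁) x₂ / ((2 / x₁) ^ s * x₂ ^ t) = T ∧
      pev p x₁ (2 / x₂) / (x₁ ^ s * (2 / x₂) ^ t) = T) ↔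
    ∃ G : MvPolynomial (Fin 2) ℚ, T = pev G (x₁ + 2 / x₁) (x₂ + 2 / x₂) := by
  constructor
  · rintro ⟨p, s, t, hT, h1, h2⟩
    exact forward T p s t hT h1 h2
  · rintro ⟨G, hG⟩
    obtain ⟨p, s, t, h⟩ := backward T G hG
    exact ⟨p, s, t, h⟩

end
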